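/- Let ε₀, μ₀, χ, κ be real constants with ε₀ > 0 and μ₀ > 0, and set ε = ε₀ I₃, μ = μ₀ I₃, ξ = (χ − iκ) I₃, ζ = (χ + iκ) I₃, where I₃ is the 3×3 identity matrix. Let A be the 12×12 real block matrix A = [[Re ε, −Im ε, Re ξ, −Im ξ], [Im ε, Re ε, Im ξ, Re ξ], [Re ζ, −Im ζ, Re μ, −Im μ], [Im ζ, Re ζ, Im μ, Re μ]] = [[ε₀I₃, 0, χI₃, κI₃], [0, ε₀I₃, −κI₃, χI₃], [χI₃, −κI₃, μ₀I₃, 0], [κI₃, χI₃, 0, μ₀I₃]]. If χ² + κ² < ε₀ μ₀, then A satisfies the strong Legendre condition: there exists Λ > 0 such that ηᵀ A η ≥ Λ |η|² for every η ∈ ℝ¹². -/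

import Mathlib

open Matrix

noncomputable section

/-- The 4×4 array of scalar coefficients of the block matrix A. -/
def blockCoef (ε₀ μ₀ χ κ : ℝ) : Fin 4 → Fin 4 → ℝ :=
  ![![ε₀, 0, χ, κ], ![0, ε₀, -κ, χ], ![χ, -κ, μ₀, 0], ![κ, χ, 0, μ₀]]

/-- The 12×12 real block matrix A, each block being a scalar multiple of the 3×3 identity:
A = [[ε₀I₃, 0, χI₃, κI₃], [0, ε₀I₃, −κI₃, χI₃], [χI₃, −κI₃, μ₀I₃, 0], [κI₃, χI₃, 0, μ₀I₃]]. -/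
def Abig (ε₀ μ₀ χ κ : ℝ) : Matrix (Fin 12) (Fin 12) ℝ :=
  Matrix.of fun i j =>
    if (i : ℕ) % 3 = (j : ℕ) % 3 then
      blockCoef ε₀ μ₀ χ κ ⟨(i : ℕ) / 3, by have := i.isLt; omega⟩
        ⟨(j : ℕ) / 3, by have := j.isLt; omega⟩
    else 0

lemma key_aux (P Q χ κ a b c d : ℝ) (hP : 0 ≤ P) (hQ : 0 ≤ Q)
    (hPQ : χ^2 + κ^2 ≤ P*Q) :
    0 ≤ P*(a^2+b^2) + Q*(c^2+d^2) + 2*(χ*(a*c+b*d) + κ*(a*d-b*c)) := by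
  have hS : 0 ≤ P*(a^2+b^2) + Q*(c^2+d^2) := by positivity
  have h2 : (χ^2+κ^2)*((a^2+b^2)*(c^2+d^2)) ≤ (P*Q)*((a^2+b^2)*(c^2+d^2)) := by
    apply mul_le_mul_of_nonneg_right hPQ; positivity
  have h1 : 4*(χ*(a*c+b*d) + κ*(a*d-b*c))^2 ≤ (P*(a^2+b^2) + Q*(c^2+d^2))^2 := by
    nlinarith [sq_nonneg (P*(a^2+b^2) - Q*(c^2+d^2)),
      sq_nonneg (χ*(a*d-b*c) - κ*(a*c+b*d))]
  nlinarith [hS, h1]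

set_option maxHeartbeats 1000000 in
/-- Chiral materials with χ² + κ² < ε₀μ₀ satisfy the strong Legendre condition. -/
theorem stmt_5 (ε₀ μ₀ χ κ : ℝ) (hε : 0 < ε₀) (hμ : 0 < μ₀)
    (h : χ ^ 2 + κ ^ 2 < ε₀ * μ₀) :
    ∃ Λ > 0, ∀ η : Fin 12 → ℝ,
      Λ * (∑ i, η i ^ 2) ≤ η ⬝ᵥ (Abig ε₀ μ₀ χ κ *ᵥ η) := by
  set Λ : ℝ := (ε₀*μ₀ - (χ^2+κ^2))/(ε₀+μ₀) with hΛ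
  have hden : 0 < ε₀ + μ₀ := by linarith
  have hΛpos : 0 < Λ := div_pos (by linarith) hden
  have hΛε : Λ ≤ ε₀ := by
    rw [div_le_iff₀ hden]; nlinarith [sq_nonneg χ, sq_nonneg κ, sq_nonneg ε₀]
  have hΛμ : Λ ≤ μ₀ := by
    rw [div_le_iff₀ hden]; nlinarith [sq_nonneg χ, sq_nonneg κ, sq_nonneg μ₀]
  have hPQ : χ^2 + κ^2 ≤ (ε₀ - Λ) * (μ₀ - Λ) := by
    have hΛeq : Λ * (ε₀ + μ₀) = ε₀*μ₀ - (χ^2+κ^2) := by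
      rw [hΛ]; exact div_mul_cancel₀ _ hden.ne'
    nlinarith [sq_nonneg Λ]
  refine ⟨Λ, hΛpos, fun η => ?_⟩
  have k0 := key_aux (ε₀ - Λ) (μ₀ - Λ) χ κ (η 0) (η 3) (η 6) (η 9)
    (by linarith) (by linarith) hPQ
  have k1 := key_aux (ε₀ - Λ) (μ₀ - Λ) χ κ (η 1) (η 4) (η 7) (η 10)
    (by linarith) (by linarith) hPQ
  have k2 := key_aux (ε₀ - Λ) (μ₀ - Λ) χ κ (η 2) (η 5) (η 8) (η 11)
    (by linarith) (by linarith) hPQ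
  simp only [dotProduct, mulVec,
    Fin.sum_univ_succ, Fin.sum_univ_zero,
    show Fin.succ (0 : Fin 11) = (1 : Fin 12) from rfl,
    show (Fin.succ (0 : Fin 10)).succ = (2 : Fin 12) from rfl,
    show (Fin.succ (0 : Fin 9)).succ.succ = (3 : Fin 12) from rfl,
    show (Fin.succ (0 : Fin 8)).succ.succ.succ = (4 : Fin 12) from rfl,
    show (Fin.succ (0 : Fin 7)).succ.succ.succ.succ = (5 : Fin 12) from rfl,
    show (Fin.succ (0 : Fin 6)).succ.succ.succ.succ.succ = (6 : Fin 12) from rfl,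
    show (Fin.succ (0 : Fin 5)).succ.succ.succ.succ.succ.succ = (7 : Fin 12) from rfl,
    show (Fin.succ (0 : Fin 4)).succ.succ.succ.succ.succ.succ.succ = (8 : Fin 12) from rfl,
    show (Fin.succ (0 : Fin 3)).succ.succ.succ.succ.succ.succ.succ.succ = (9 : Fin 12) from rfl,
    show (Fin.succ (0 : Fin 2)).succ.succ.succ.succ.succ.succ.succ.succ.succ = (10 : Fin 12) from rfl,
    show (Fin.succ (0 : Fin 1)).succ.succ.succ.succ.succ.succ.succ.succ.succ.succ = (11 : Fin 12) from rfl,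
    show Abig ε₀ μ₀ χ κ 0 0 = ε₀ from rfl,
    show Abig ε₀ μ₀ χ κ 0 1 = 0 from rfl,
    show Abig ε₀ μ₀ χ κ 0 2 = 0 from rfl,
    show Abig ε₀ μ₀ χ κ 0 3 = 0 from rfl,
    show Abig ε₀ μ₀ χ κ 0 4 = 0 from rfl,
    show Abig ε₀ μ₀ χ κ 0 5 = 0 from rfl,
    show Abig ε₀ μ₀ χ κ 0 6 = χ from rfl,
    show Abig ε₀ μ₀ χ κ 0 7 = 0 from rfl,
    show Abig ε₀ μ₀ χ κ 0 8 = 0 from rfl,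
    show Abig ε₀ μ₀ χ κ 0 9 = κ from rfl,
    show Abig ε₀ μ₀ χ κ 0 10 = 0 from rfl,
    show Abig ε₀ μ₀ χ κ 0 11 = 0 from rfl,
    show Abig ε₀ μ₀ χ κ 1 0 = 0 from rfl,
    show Abig ε₀ μ₀ χ κ 1 1 = ε₀ from rfl,
    show Abig ε₀ μ₀ χ κ 1 2 = 0 from rfl,
    show Abig ε₀ μ₀ χ κ 1 3 = 0 from rfl,
    show Abig ε₀ μ₀ χ κ 1 4 = 0 from rfl,
    show Abig ε₀ μ₀ χ κ 1 5 = 0 from rfl,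
    show Abig ε₀ μ₀ χ κ 1 6 = 0 from rfl,
    show Abig ε₀ μ₀ χ κ 1 7 = χ from rfl,
    show Abig ε₀ μ₀ χ κ 1 8 = 0 from rfl,
    show Abig ε₀ μ₀ χ κ 1 9 = 0 from rfl,
    show Abig ε₀ μ₀ χ κ 1 10 = κ from rfl,
    show Abig ε₀ μ₀ χ κ 1 11 = 0 from rfl,
    show Abig ε₀ μ₀ χ κ 2 0 = 0 from rfl,
    show Abig ε₀ μ₀ χ κ 2 1 = 0 from rfl,
    show Abig ε₀ μ₀ χ κ 2 2 = ε₀ from rfl,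
    show Abig ε₀ μ₀ χ κ 2 3 = 0 from rfl,
    show Abig ε₀ μ₀ χ κ 2 4 = 0 from rfl,
    show Abig ε₀ μ₀ χ κ 2 5 = 0 from rfl,
    show Abig ε₀ μ₀ χ κ 2 6 = 0 from rfl,
    show Abig ε₀ μ₀ χ κ 2 7 = 0 from rfl,
    show Abig ε₀ μ₀ χ κ 2 8 = χ from rfl,
    show Abig ε₀ μ₀ χ κ 2 9 = 0 from rfl,
    show Abig ε₀ μ₀ χ κ 2 10 = 0 from rfl,
    show Abig ε₀ μ₀ χ κ 2 11 = κ from rfl,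
    show Abig ε₀ μ₀ χ κ 3 0 = 0 from rfl,
    show Abig ε₀ μ₀ χ κ 3 1 = 0 from rfl,
    show Abig ε₀ μ₀ χ κ 3 2 = 0 from rfl,
    show Abig ε₀ μ₀ χ κ 3 3 = ε₀ from rfl,
    show Abig ε₀ μ₀ χ κ 3 4 = 0 from rfl,
    show Abig ε₀ μ₀ χ κ 3 5 = 0 from rfl,
    show Abig ε₀ μ₀ χ κ 3 6 = -κ from rfl,
    show Abig ε₀ μ₀ χ κ 3 7 = 0 from rfl,
    show Abig ε₀ μ₀ χ κ 3 8 = 0 from rfl,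
    show Abig ε₀ μ₀ χ κ 3 9 = χ from rfl,
    show Abig ε₀ μ₀ χ κ 3 10 = 0 from rfl,
    show Abig ε₀ μ₀ χ κ 3 11 = 0 from rfl,
    show Abig ε₀ μ₀ χ κ 4 0 = 0 from rfl,
    show Abig ε₀ μ₀ χ κ 4 1 = 0 from rfl,
    show Abig ε₀ μ₀ χ κ 4 2 = 0 from rfl,
    show Abig ε₀ μ₀ χ κ 4 3 = 0 from rfl,
    show Abig ε₀ μ₀ χ κ 4 4 = ε₀ from rfl,
    show Abig ε₀ μ₀ χ κ 4 5 = 0 from rfl,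
    show Abig ε₀ μ₀ χ κ 4 6 = 0 from rfl,
    show Abig ε₀ μ₀ χ κ 4 7 = -κ from rfl,
    show Abig ε₀ μ₀ χ κ 4 8 = 0 from rfl,
    show Abig ε₀ μ₀ χ κ 4 9 = 0 from rfl,
    show Abig ε₀ μ₀ χ κ 4 10 = χ from rfl,
    show Abig ε₀ μ₀ χ κ 4 11 = 0 from rfl,
    show Abig ε₀ μ₀ χ κ 5 0 = 0 from rfl,
    show Abig ε₀ μ₀ χ κ 5 1 = 0 from rfl,
    show Abig ε₀ μ₀ χ κ 5 2 = 0 from rfl,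
    show Abig ε₀ μ₀ χ κ 5 3 = 0 from rfl,
    show Abig ε₀ μ₀ χ κ 5 4 = 0 from rfl,
    show Abig ε₀ μ₀ χ κ 5 5 = ε₀ from rfl,
    show Abig ε₀ μ₀ χ κ 5 6 = 0 from rfl,
    show Abig ε₀ μ₀ χ κ 5 7 = 0 from rfl,
    show Abig ε₀ μ₀ χ κ 5 8 = -κ from rfl,
    show Abig ε₀ μ₀ χ κ 5 9 = 0 from rfl,
    show Abig ε₀ μ₀ χ κ 5 10 = 0 from rfl,
    show Abig ε₀ μ₀ χ κ 5 11 = χ from rfl,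
    show Abig ε₀ μ₀ χ κ 6 0 = χ from rfl,
    show Abig ε₀ μ₀ χ κ 6 1 = 0 from rfl,
    show Abig ε₀ μ₀ χ κ 6 2 = 0 from rfl,
    show Abig ε₀ μ₀ χ κ 6 3 = -κ from rfl,
    show Abig ε₀ μ₀ χ κ 6 4 = 0 from rfl,
    show Abig ε₀ μ₀ χ κ 6 5 = 0 from rfl,
    show Abig ε₀ μ₀ χ κ 6 6 = μ₀ from rfl,
    show Abig ε₀ μ₀ χ κ 6 7 = 0 from rfl,
    show Abig ε₀ μ₀ χ κ 6 8 = 0 from rfl,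
    show Abig ε₀ μ₀ χ κ 6 9 = 0 from rfl,
    show Abig ε₀ μ₀ χ κ 6 10 = 0 from rfl,
    show Abig ε₀ μ₀ χ κ 6 11 = 0 from rfl,
    show Abig ε₀ μ₀ χ κ 7 0 = 0 from rfl,
    show Abig ε₀ μ₀ χ κ 7 1 = χ from rfl,
    show Abig ε₀ μ₀ χ κ 7 2 = 0 from rfl,
    show Abig ε₀ μ₀ χ κ 7 3 = 0 from rfl,
    show Abig ε₀ μ₀ χ κ 7 4 = -κ from rfl,
    show Abig ε₀ μ₀ χ κ 7 5 = 0 from rfl,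
    show Abig ε₀ μ₀ χ κ 7 6 = 0 from rfl,
    show Abig ε₀ μ₀ χ κ 7 7 = μ₀ from rfl,
    show Abig ε₀ μ₀ χ κ 7 8 = 0 from rfl,
    show Abig ε₀ μ₀ χ κ 7 9 = 0 from rfl,
    show Abig ε₀ μ₀ χ κ 7 10 = 0 from rfl,
    show Abig ε₀ μ₀ χ κ 7 11 = 0 from rfl,
    show Abig ε₀ μ₀ χ κ 8 0 = 0 from rfl,
    show Abig ε₀ μ₀ χ κ 8 1 = 0 from rfl,
    show Abig ε₀ μ₀ χ κ 8 2 = χ from rfl,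
    show Abig ε₀ μ₀ χ κ 8 3 = 0 from rfl,
    show Abig ε₀ μ₀ χ κ 8 4 = 0 from rfl,
    show Abig ε₀ μ₀ χ κ 8 5 = -κ from rfl,
    show Abig ε₀ μ₀ χ κ 8 6 = 0 from rfl,
    show Abig ε₀ μ₀ χ κ 8 7 = 0 from rfl,
    show Abig ε₀ μ₀ χ κ 8 8 = μ₀ from rfl,
    show Abig ε₀ μ₀ χ κ 8 9 = 0 from rfl,
    show Abig ε₀ μ₀ χ κ 8 10 = 0 from rfl,
    show Abig ε₀ μ₀ χ κ 8 11 = 0 from rfl,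
    show Abig ε₀ μ₀ χ κ 9 0 = κ from rfl,
    show Abig ε₀ μ₀ χ κ 9 1 = 0 from rfl,
    show Abig ε₀ μ₀ χ κ 9 2 = 0 from rfl,
    show Abig ε₀ μ₀ χ κ 9 3 = χ from rfl,
    show Abig ε₀ μ₀ χ κ 9 4 = 0 from rfl,
    show Abig ε₀ μ₀ χ κ 9 5 = 0 from rfl,
    show Abig ε₀ μ₀ χ κ 9 6 = 0 from rfl,
    show Abig ε₀ μ₀ χ κ 9 7 = 0 from rfl,
    show Abig ε₀ μ₀ χ κ 9 8 = 0 from rfl,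
    show Abig ε₀ μ₀ χ κ 9 9 = μ₀ from rfl,
    show Abig ε₀ μ₀ χ κ 9 10 = 0 from rfl,
    show Abig ε₀ μ₀ χ κ 9 11 = 0 from rfl,
    show Abig ε₀ μ₀ χ κ 10 0 = 0 from rfl,
    show Abig ε₀ μ₀ χ κ 10 1 = κ from rfl,
    show Abig ε₀ μ₀ χ κ 10 2 = 0 from rfl,
    show Abig ε₀ μ₀ χ κ 10 3 = 0 from rfl,
    show Abig ε₀ μ₀ χ κ 10 4 = χ from rfl,
    show Abig ε₀ μ₀ χ κ 10 5 = 0 from rfl,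
    show Abig ε₀ μ₀ χ κ 10 6 = 0 from rfl,
    show Abig ε₀ μ₀ χ κ 10 7 = 0 from rfl,
    show Abig ε₀ μ₀ χ κ 10 8 = 0 from rfl,
    show Abig ε₀ μ₀ χ κ 10 9 = 0 from rfl,
    show Abig ε₀ μ₀ χ κ 10 10 = μ₀ from rfl,
    show Abig ε₀ μ₀ χ κ 10 11 = 0 from rfl,
    show Abig ε₀ μ₀ χ κ 11 0 = 0 from rfl,
    show Abig ε₀ μ₀ χ κ 11 1 = 0 from rfl,
    show Abig ε₀ μ₀ χ κ 11 2 = κ from rfl,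
    show Abig ε₀ μ₀ χ κ 11 3 = 0 from rfl,
    show Abig ε₀ μ₀ χ κ 11 4 = 0 from rfl,
    show Abig ε₀ μ₀ χ κ 11 5 = χ from rfl,
    show Abig ε₀ μ₀ χ κ 11 6 = 0 from rfl,
    show Abig ε₀ μ₀ χ κ 11 7 = 0 from rfl,
    show Abig ε₀ μ₀ χ κ 11 8 = 0 from rfl,
    show Abig ε₀ μ₀ χ κ 11 9 = 0 from rfl,
    show Abig ε₀ μ₀ χ κ 11 10 = 0 from rfl,
    show Abig ε₀ μ₀ χ κ 11 11 = μ₀ from rfl]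
  ring_nf
  ring_nf at k0 k1 k2
  linarith [k0, k1, k2]
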